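/- Let G be a finitely presented group with finite symmetric generating set S and let H be a finitely generated group with finite symmetric generating set T, each equipped with its word metric. Then for every n ∈ ℕ, the set {df : f ∈ Lip_n(G,H)} ⊆ (B_H(n,1_H)^S)^G is a subshift of finite type. -/
import Mathlib


/-- The Cayley graph of a group with respect to a (symmetric) set `S`:
`g` and `g'` are adjacent when they differ by right multiplication by an element of `S`. -/
def cayley {G : Type*} [Group G] (S : Set G) : SimpleGraph G :=
  SimpleGraph.fromRel (fun g g' => g⁻¹ * g' ∈ S)

/-- The closed ball of radius `n` about `g` in the word metric induced by `S`. -/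
def ball {G : Type*} [Group G] (S : Set G) (n : ℕ) (g : G) : Set G :=
  {x : G | (cayley S).dist g x ≤ n}

/-- `f : G → H` is `n`-Lipschitz for the word metrics associated to `S` and `T`. -/
def IsLip {G H : Type*} [Group G] [Group H] (S : Set G) (T : Set H)
    (n : ℕ) (f : G → H) : Prop :=
  ∀ x y : G, (cayley T).dist (f x) (f y) ≤ n * (cayley S).dist x y

/-- The product in `G` of (the letters of) a word over `S`. -/
def wordProd {G : Type*} [Group G] (S : Finset G) (w : List ↥S) : G :=
  (w.map (fun s => (s : G))).prod

/-- The integral `∫_{g·w} σ` of a configuration `σ : G → (S → H)` along the word `w` based at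
`g` : the telescoping product `σ(g)(s₀)·σ(gs₀)(s₁)⋯σ(gs₀⋯s_{k-1})(s_k)`. -/
def sint {G H : Type*} [Group G] [Group H] {S : Finset G}
    (σ : G → ↥S → H) : G → List ↥S → H
  | _, [] => 1
  | g, s :: w => σ g s * sint σ (g * (s : G)) w

/-- An elementary homotopy move between words over `S`: replace a subword `v` of length at
most `K` by a word `v'` of length at most `K` representing the same element of `G`. -/
def ElemMove {G : Type*} [Group G] (S : Finset G) (K : ℕ) (w₁ w₂ : List ↥S) : Prop :=
  ∃ u v v' x : List ↥S, w₁ = u ++ v ++ x ∧ w₂ = u ++ v' ++ x ∧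
    v.length ≤ K ∧ v'.length ≤ K ∧ wordProd S v = wordProd S v'

/-- `G` is presented over the (symmetric) generating set `S` by relators of length at most
`K`: any two words over `S` representing the same element of `G` are connected by a finite
sequence of elementary moves of size at most `K`. -/
def PresentedBy {G : Type*} [Group G] (S : Finset G) (K : ℕ) : Prop :=
  ∀ w w' : List ↥S, wordProd S w = wordProd S w' →
    Relation.ReflTransGen (ElemMove S K) w w'

/-- `X ⊆ A^G` is a subshift of finite type: there is a finite family of forbidden patterns
`p i : F i → A` (`F i ⊆ G` finite) such that `X` consists exactly of those `σ` for which no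
translate `σ·g = (x ↦ σ (g * x))` restricts on `F i` to `p i`. -/
def IsSFT {G A : Type*} [Group G] (X : Set (G → A)) : Prop :=
  ∃ (ι : Type) (_ : Finite ι) (F : ι → Finset G) (p : (i : ι) → (↥(F i) → A)),
    X = {σ : G → A | ∀ (g : G) (i : ι), ∃ x : ↥(F i), σ (g * ↑x) ≠ p i x}

namespace Stmt9Aux

variable {G H : Type*} [Group G] [Group H]

lemma wordProd_nil (S : Finset G) : wordProd S ([] : List ↥S) = 1 := rfl

lemma wordProd_cons (S : Finset G) (s : ↥S) (w : List ↥S) :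
    wordProd S (s :: w) = (s : G) * wordProd S w := by simp [wordProd]

lemma wordProd_append (S : Finset G) (a b : List ↥S) :
    wordProd S (a ++ b) = wordProd S a * wordProd S b := by simp [wordProd]

lemma sint_nil {S : Finset G} (σ : G → ↥S → H) (g : G) : sint σ g [] = 1 := rfl

lemma sint_cons {S : Finset G} (σ : G → ↥S → H) (g : G) (s : ↥S) (w : List ↥S) :
    sint σ g (s :: w) = σ g s * sint σ (g * (s : G)) w := rfl

lemma sint_append {S : Finset G} (σ : G → ↥S → H) (g : G) (a b : List ↥S) :
    sint σ g (a ++ b) = sint σ g a * sint σ (g * wordProd S a) b := by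
  induction a generalizing g with
  | nil => simp [sint_nil, wordProd_nil]
  | cons s a ih => simp [sint_cons, ih, wordProd_cons, mul_assoc]

lemma sint_congr {S : Finset G} (σ τ : G → ↥S → H) (g : G) (v : List ↥S)
    (h : ∀ j < v.length, σ (g * wordProd S (v.take j)) = τ (g * wordProd S (v.take j))) :
    sint σ g v = sint τ g v := by
  induction v generalizing g with
  | nil => rfl
  | cons s v ih =>
    have h0 : σ g = τ g := by
      have := h 0 (by simp)
      simpa [wordProd_nil] using this
    rw [sint_cons, sint_cons, h0, ih]
    intro j hj
    have := h (j + 1) (by simpa using Nat.succ_lt_succ hj)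
    simpa [List.take_succ_cons, wordProd_cons, mul_assoc] using this

lemma sint_shift {S : Finset G} (σ : G → ↥S → H) (g : G) (h : G) (w : List ↥S) :
    sint σ (g * h) w = sint (fun x => σ (g * x)) h w := by
  induction w generalizing h with
  | nil => rfl
  | cons s w ih => rw [sint_cons, sint_cons, mul_assoc, ih]

lemma wordProd_inv (S : Finset G) (hSsym : ∀ s ∈ S, s⁻¹ ∈ S) (w : List ↥S) :
    wordProd S (w.reverse.map (fun s : ↥S => (⟨(s : G)⁻¹, hSsym _ s.2⟩ : ↥S))) = (wordProd S w)⁻¹ := by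
  induction w with
  | nil => simp [wordProd_nil]
  | cons s w ih =>
    simp only [List.reverse_cons, List.map_append, List.map_cons, List.map_nil]
    rw [wordProd_append, ih, wordProd_cons]
    simp [wordProd_nil, wordProd_cons, mul_inv_rev]

lemma exists_word (S : Finset G) (hSsym : ∀ s ∈ S, s⁻¹ ∈ S)
    (hSgen : Subgroup.closure (S : Set G) = ⊤) (g : G) :
    ∃ w : List ↥S, wordProd S w = g := by
  have hg : g ∈ Subgroup.closure (S : Set G) := by rw [hSgen]; trivial
  induction hg using Subgroup.closure_induction with
  | mem x hx => exact ⟨[⟨x, hx⟩], by simp [wordProd_cons, wordProd_nil]⟩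
  | one => exact ⟨[], rfl⟩
  | mul x y hx hy ihx ihy =>
    obtain ⟨w, hw⟩ := ihx; obtain ⟨w', hw'⟩ := ihy
    exact ⟨w ++ w', by rw [wordProd_append, hw, hw']⟩
  | inv x hx ihx =>
    obtain ⟨w, hw⟩ := ihx
    exact ⟨w.reverse.map (fun s : ↥S => (⟨(s : G)⁻¹, hSsym _ s.2⟩ : ↥S)), by rw [wordProd_inv S hSsym, hw]⟩

section Graph

variable {G H : Type*} [Group G] [Group H]

lemma cayley_adj {S : Set G} {x y : G} :
    (cayley S).Adj x y ↔ x ≠ y ∧ (x⁻¹ * y ∈ S ∨ y⁻¹ * x ∈ S) := by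
  simp [cayley, SimpleGraph.fromRel_adj]

/-- Left multiplication as a graph homomorphism of the Cayley graph. -/
def homMul (S : Set G) (a : G) : cayley S →g cayley S where
  toFun := fun x => a * x
  map_rel' := by
    intro x y h
    rw [cayley_adj] at h ⊢
    refine ⟨fun hc => h.1 (mul_left_cancel hc), ?_⟩
    simpa [mul_assoc] using h.2

lemma reach_smul {S : Set G} (a : G) {x y : G} (h : (cayley S).Reachable x y) :
    (cayley S).Reachable (a * x) (a * y) :=
  h.map (homMul S a)

lemma dist_smul_le (S : Set G) (a x y : G) :
    (cayley S).dist (a * x) (a * y) ≤ (cayley S).dist x y := by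
  by_cases hr : (cayley S).Reachable x y
  · obtain ⟨p, hp⟩ := hr.exists_walk_length_eq_dist
    calc (cayley S).dist (a * x) (a * y) ≤ (p.map (homMul S a)).length :=
          SimpleGraph.dist_le _
      _ = p.length := SimpleGraph.Walk.length_map _ _
      _ = _ := hp
  · rw [SimpleGraph.dist_eq_zero_of_not_reachable hr,
      SimpleGraph.dist_eq_zero_of_not_reachable]
    intro hc
    have := reach_smul a⁻¹ hc
    simp only [inv_mul_cancel_left] at this
    exact hr this

lemma dist_smul_eq (S : Set G) (a x y : G) :
    (cayley S).dist (a * x) (a * y) = (cayley S).dist x y := by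
  refine le_antisymm (dist_smul_le S a x y) ?_
  have := dist_smul_le S a⁻¹ (a * x) (a * y)
  simpa using this

lemma reach_mul_right (S : Finset G) (g : G) (s : ↥S) :
    (cayley (S : Set G)).Reachable g (g * (s : G)) := by
  by_cases h : g = g * (s : G)
  · rw [← h]
  · exact (cayley_adj.mpr ⟨h, Or.inl (by simp [s.2])⟩).reachable

lemma reach_one (S : Finset G) (hSsym : ∀ s ∈ S, s⁻¹ ∈ S)
    (hSgen : Subgroup.closure (S : Set G) = ⊤) (g : G) :
    (cayley (S : Set G)).Reachable 1 g := by
  obtain ⟨w, hw⟩ := exists_word S hSsym hSgen g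
  subst hw
  induction w using List.reverseRecOn with
  | nil => rw [wordProd_nil]
  | append_singleton w s ih =>
    rw [wordProd_append]
    refine ih.trans ?_
    have := reach_mul_right S (wordProd S w) s
    simpa [wordProd_cons, wordProd_nil] using this

lemma cayley_connected (S : Finset G) (hSsym : ∀ s ∈ S, s⁻¹ ∈ S)
    (hSgen : Subgroup.closure (S : Set G) = ⊤) :
    (cayley (S : Set G)).Connected := by
  refine SimpleGraph.Connected.mk ?_
  exact fun x y => (reach_one S hSsym hSgen x).symm.trans (reach_one S hSsym hSgen y)

lemma walk_to_word (T : Finset H) (hTsym : ∀ t ∈ T, t⁻¹ ∈ T) {u v : H}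
    (p : (cayley (T : Set H)).Walk u v) :
    ∃ w : List ↥T, w.length ≤ p.length ∧ u * wordProd T w = v := by
  induction p with
  | nil => exact ⟨[], by simp [wordProd_nil]⟩
  | @cons u u' v hadj p ih =>
    obtain ⟨w, hwl, hwp⟩ := ih
    have ht : u⁻¹ * u' ∈ T := by
      rcases (cayley_adj.mp hadj).2 with h | h
      · exact h
      · have := hTsym _ h
        simpa using this
    refine ⟨⟨u⁻¹ * u', ht⟩ :: w, by simpa using Nat.succ_le_succ hwl, ?_⟩
    rw [wordProd_cons, ← mul_assoc]
    simpa using hwp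

lemma ball_finite (T : Finset H) (hTsym : ∀ t ∈ T, t⁻¹ ∈ T)
    (hTgen : Subgroup.closure (T : Set H) = ⊤) (n : ℕ) :
    (ball (T : Set H) n 1).Finite := by
  have hsub : ball (T : Set H) n 1 ⊆
      (fun w => wordProd T w) '' {w : List ↥T | w.length ≤ n} := by
    intro h hball
    have hr : (cayley (T : Set H)).Reachable 1 h := reach_one T hTsym hTgen h
    obtain ⟨p, hp⟩ := hr.exists_walk_length_eq_dist
    obtain ⟨w, hwl, hwp⟩ := walk_to_word T hTsym p
    exact ⟨w, le_trans hwl (hp ▸ hball), by simpa using hwp⟩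
  exact Set.Finite.subset (Set.Finite.image _ (List.finite_length_le _ n)) hsub

lemma one_mem_ball (T : Set H) (n : ℕ) : (1 : H) ∈ ball T n 1 := by
  simp [ball, SimpleGraph.dist_self]

end Graph
section Lip

variable {G H : Type*} [Group G] [Group H]

lemma isLip_of_step (S : Finset G) (T : Finset H)
    (hSconn : (cayley (S : Set G)).Connected) (hTconn : (cayley (T : Set H)).Connected)
    (n : ℕ) (f : G → H)
    (hstep : ∀ x y : G, (cayley (S : Set G)).Adj x y →
      (cayley (T : Set H)).dist (f x) (f y) ≤ n) :
    IsLip (S : Set G) (T : Set H) n f := by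
  intro x y
  obtain ⟨p, hp⟩ := (hSconn x y).exists_walk_length_eq_dist
  rw [← hp]
  clear hp
  induction p with
  | nil => simp [SimpleGraph.dist_self]
  | @cons x x' y hadj p ih =>
    rw [SimpleGraph.Walk.length_cons]
    calc (cayley (T : Set H)).dist (f x) (f y)
        ≤ (cayley (T : Set H)).dist (f x) (f x') + (cayley (T : Set H)).dist (f x') (f y) :=
          hTconn.dist_triangle
      _ ≤ n + n * p.length := add_le_add (hstep _ _ hadj) ih
      _ = n * (p.length + 1) := by ring

lemma sint_telescope {S : Finset G} (σ : G → ↥S → H) (f : G → H)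
    (hdf : ∀ (g : G) (s : ↥S), σ g s = (f g)⁻¹ * f (g * (s : G))) (g : G) (w : List ↥S) :
    sint σ g w = (f g)⁻¹ * f (g * wordProd S w) := by
  induction w generalizing g with
  | nil => simp [sint_nil, wordProd_nil]
  | cons s w ih =>
    rw [sint_cons, hdf, ih, wordProd_cons]
    simp [mul_assoc]

end Lip

section Pat

variable {G H : Type*} [Group G] [Group H]

/-- coerce a ball-valued configuration to an `H`-valued one -/
def cval (S : Finset G) (T : Finset H) (n : ℕ)
    (σ : G → ↥S → ↥(ball (T : Set H) n 1)) : G → ↥S → H :=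
  fun g s => (σ g s : H)

open Classical in
noncomputable def extPat (S : Finset G) (T : Finset H) (n : ℕ) (FK : Finset G)
    (q : ↥FK → (↥S → ↥(ball (T : Set H) n 1))) : G → ↥S → H :=
  fun g s => if h : g ∈ FK then (q ⟨g, h⟩ s : H) else 1

lemma extPat_sint (S : Finset G) (T : Finset H) (n : ℕ) (FK : Finset G) (K : ℕ)
    (hFK : ∀ w : List ↥S, w.length ≤ K → wordProd S w ∈ FK)
    (σ : G → ↥S → ↥(ball (T : Set H) n 1)) (g : G) (v : List ↥S) (hv : v.length ≤ K)
    (q : ↥FK → (↥S → ↥(ball (T : Set H) n 1)))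
    (hq : ∀ x : ↥FK, q x = σ (g * (x : G))) :
    sint (extPat S T n FK q) 1 v = sint (cval S T n σ) g v := by
  have h1 : sint (cval S T n σ) g v = sint (fun x => cval S T n σ (g * x)) 1 v := by
    have := sint_shift (cval S T n σ) g 1 v
    rwa [mul_one] at this
  rw [h1]
  apply sint_congr
  intro j hj
  have hmem : wordProd S (v.take j) ∈ FK := by
    apply hFK
    calc (v.take j).length ≤ j := by simp [List.length_take]
      _ ≤ v.length := le_of_lt hj
      _ ≤ K := hv
  rw [one_mul]
  funext s
  show extPat S T n FK q (wordProd S (v.take j)) s = (σ (g * wordProd S (v.take j)) s : H)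
  simp only [extPat]
  rw [dif_pos hmem, hq ⟨_, hmem⟩]

end Pat

section SFT

lemma isSFT_of {G A : Type*} [Group G] {X : Set (G → A)} {ι : Type*} [Finite ι]
    (F : ι → Finset G) (p : (i : ι) → (↥(F i) → A))
    (h : X = {σ : G → A | ∀ (g : G) (i : ι), ∃ x : ↥(F i), σ (g * ↑x) ≠ p i x}) : IsSFT X := by
  obtain ⟨m, ⟨e⟩⟩ := Finite.exists_equiv_fin ι
  refine ⟨Fin m, inferInstance, fun i => F (e.symm i), fun i => p (e.symm i), ?_⟩
  rw [h]
  ext σ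
  simp only [Set.mem_setOf_eq]
  constructor
  · intro hσ g i
    exact hσ g (e.symm i)
  · intro hσ g i
    have := hσ g (e i)
    rw [e.symm_apply_apply] at this
    exact this

end SFT
end Stmt9Aux

open Stmt9Aux

/-- for a finitely presented group `G` and finitely generated group `H`, the set
of derivatives `df` of `n`-Lipschitz functions `f : G → H`, viewed inside
`(B_H(n,1)^S)^G`, is a subshift of finite type.  Here `σ = df` means
`⟨σ(g),s⟩ = f(g)⁻¹·f(gs)` for all `g, s`. -/
theorem stmt9 {G H : Type*} [Group G] [Group H] (S : Finset G) (T : Finset H)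
    (hSsym : ∀ s ∈ S, s⁻¹ ∈ S) (hSgen : Subgroup.closure (S : Set G) = ⊤)
    (hTsym : ∀ t ∈ T, t⁻¹ ∈ T) (hTgen : Subgroup.closure (T : Set H) = ⊤)
    (hfp : ∃ K : ℕ, PresentedBy S K) (n : ℕ) :
    IsSFT {σ : G → (↥S → ↥(ball (T : Set H) n 1)) |
      ∃ f : G → H, IsLip (S : Set G) (T : Set H) n f ∧
        ∀ (g : G) (s : ↥S), ((σ g s : H)) = (f g)⁻¹ * f (g * ↑s)} := by
  classical
  obtain ⟨K, hK⟩ := hfp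
  haveI hballfin : Finite ↥(ball (T : Set H) n 1) :=
    (ball_finite T hTsym hTgen n).to_subtype
  have hFKfin : ((fun w => wordProd S w) '' {w : List ↥S | w.length ≤ K}).Finite :=
    Set.Finite.image _ (List.finite_length_le _ K)
  set FK : Finset G := hFKfin.toFinset with hFKdef
  have hFK : ∀ w : List ↥S, w.length ≤ K → wordProd S w ∈ FK := by
    intro w hw
    rw [hFKdef, Set.Finite.mem_toFinset]
    exact ⟨w, hw, rfl⟩
  let P : (List ↥S × List ↥S) × (↥FK → (↥S → ↥(ball (T : Set H) n 1))) → Prop := fun x =>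
    x.1.1.length ≤ K ∧ x.1.2.length ≤ K ∧ wordProd S x.1.1 = wordProd S x.1.2 ∧
      sint (extPat S T n FK x.2) 1 x.1.1 ≠ sint (extPat S T n FK x.2) 1 x.1.2
  haveI hι : Finite {x // P x} := by
    haveI h1 : Finite {w : List ↥S // w.length ≤ K} :=
      (List.finite_length_le ↥S K).to_subtype
    apply Finite.of_injective (fun i : {x // P x} =>
      ((⟨i.1.1.1, i.2.1⟩ : {w : List ↥S // w.length ≤ K}),
       (⟨i.1.1.2, i.2.2.1⟩ : {w : List ↥S // w.length ≤ K}), i.1.2))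
    intro a b h
    obtain ⟨⟨⟨va, va'⟩, qa⟩, hPa⟩ := a
    obtain ⟨⟨⟨vb, vb'⟩, qb⟩, hPb⟩ := b
    simp only [Prod.mk.injEq, Subtype.mk.injEq] at h ⊢
    exact ⟨⟨h.1, h.2.1⟩, h.2.2⟩
  apply isSFT_of (ι := {x // P x}) (fun _ => FK) (fun i => i.1.2)
  ext σ
  simp only [Set.mem_setOf_eq]
  constructor
  · rintro ⟨f, hf, hdf⟩ g i
    by_contra hc
    push_neg at hc
    apply i.2.2.2.2
    have hdf' : ∀ (g : G) (s : ↥S), cval S T n σ g s = (f g)⁻¹ * f (g * (s : G)) := hdf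
    rw [extPat_sint S T n FK K hFK σ g _ i.2.1 i.1.2 (fun x => (hc x).symm),
        extPat_sint S T n FK K hFK σ g _ i.2.2.1 i.1.2 (fun x => (hc x).symm),
        sint_telescope _ f hdf', sint_telescope _ f hdf', i.2.2.2.1]
  · intro hσ
    have key : ∀ (g : G) (v v' : List ↥S), v.length ≤ K → v'.length ≤ K →
        wordProd S v = wordProd S v' →
        sint (cval S T n σ) g v = sint (cval S T n σ) g v' := by
      intro g v v' h1 h2 h3
      by_contra hne
      have hbad : sint (extPat S T n FK (fun x => σ (g * (x : G)))) 1 v ≠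
          sint (extPat S T n FK (fun x => σ (g * (x : G)))) 1 v' := by
        rw [extPat_sint S T n FK K hFK σ g v h1 _ (fun x => rfl),
            extPat_sint S T n FK K hFK σ g v' h2 _ (fun x => rfl)]
        exact hne
      obtain ⟨x, hx⟩ := hσ g ⟨((v, v'), fun x => σ (g * (x : G))), h1, h2, h3, hbad⟩
      exact hx rfl
    have wd : ∀ w w' : List ↥S, wordProd S w = wordProd S w' →
        sint (cval S T n σ) 1 w = sint (cval S T n σ) 1 w' := by
      have hstep : ∀ w w' : List ↥S, ElemMove S K w w' →
          sint (cval S T n σ) 1 w = sint (cval S T n σ) 1 w' := by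
        rintro w w' ⟨u, v, v', x, rfl, rfl, hv, hv', hvv⟩
        have expand : ∀ z : List ↥S, sint (cval S T n σ) 1 (u ++ z ++ x) =
            sint (cval S T n σ) 1 u * (sint (cval S T n σ) (1 * wordProd S u) z *
              sint (cval S T n σ) ((1 * wordProd S u) * wordProd S z) x) := by
          intro z
          rw [List.append_assoc, sint_append, sint_append]
        rw [expand, expand, key (1 * wordProd S u) v v' hv hv' hvv, hvv]
      intro w w' h
      have hrt := hK w w' h
      clear h
      induction hrt with
      | refl => rfl
      | tail _ hstep' ih => exact ih.trans (hstep _ _ hstep')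
    have hword := exists_word S hSsym hSgen
    set f : G → H := fun g => sint (cval S T n σ) 1 (hword g).choose with hfdef
    have hfg : ∀ g, wordProd S (hword g).choose = g := fun g => (hword g).choose_spec
    have hdf : ∀ (g : G) (s : ↥S), ((σ g s : H)) = (f g)⁻¹ * f (g * (s : G)) := by
      intro g s
      have h1 : f (g * (s : G)) = f g * (σ g s : H) := by
        have heq : wordProd S (hword (g * (s : G))).choose =
            wordProd S ((hword g).choose ++ [s]) := by
          rw [hfg, wordProd_append, hfg, wordProd_cons, wordProd_nil, mul_one]
        show sint (cval S T n σ) 1 (hword (g * (s : G))).choose = _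
        rw [wd _ _ heq, sint_append, hfg, one_mul, sint_cons, sint_nil, mul_one]
        rfl
      rw [h1, inv_mul_cancel_left]
    refine ⟨f, ?_, hdf⟩
    have step1 : ∀ x y : G, x⁻¹ * y ∈ S → (cayley (T : Set H)).dist (f x) (f y) ≤ n := by
      intro x y h
      have e := dist_smul_eq (T : Set H) (f x) 1 ((f x)⁻¹ * f y)
      simp only [mul_one, mul_inv_cancel_left] at e
      have hval : ((σ x ⟨x⁻¹ * y, h⟩ : H)) = (f x)⁻¹ * f y := by
        have := hdf x ⟨x⁻¹ * y, h⟩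
        rwa [mul_inv_cancel_left] at this
      rw [e, ← hval]
      exact (σ x ⟨x⁻¹ * y, h⟩).2
    apply isLip_of_step S T (cayley_connected S hSsym hSgen)
        (cayley_connected T hTsym hTgen) n f
    intro x y hadj
    rcases (cayley_adj.mp hadj).2 with h | h
    · exact step1 x y h
    · rw [SimpleGraph.dist_comm]
      exact step1 y x h
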